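/- Suppose there is an α-approximation algorithm producing an m-fold dominating set D of a graph G, and a γ-approximation algorithm for the minimum node-weighted k-connected Steiner network problem with terminal set D (where vertices of D are reweighted to zero). If m ≥ k, then outputting the vertex set of the resulting k-connected subgraph yields a (k,m)-CDS of G of weight at most (α + γ) times the minimum weight of a (k,m)-CDS: formally, if c(D) ≤ α·c(OPT) and c(V(F) \ D) ≤ γ·c(F_min \ D) where F_min is a minimum-weight set with G[F_min ∪ D] k-connected, then c(V(F)) ≤ (α+γ)·c(OPT). -/

import Mathlib

open scoped Classical

noncomputable section

/-- A graph is `k`-connected if it has more than `k` vertices and remains connected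
after deleting any fewer than `k` vertices. -/
def KConnected {V : Type*} [Fintype V] (k : ℕ) (G : SimpleGraph V) : Prop :=
  k < Fintype.card V ∧ ∀ S : Finset V, S.card < k → (G.induce {v : V | v ∉ S}).Connected

/-- Adding an `m`-fold dominated set (here: any set, since every vertex outside `OPT`
has `≥ m` neighbors in `OPT`) to a `k`-connected `(k,m)`-CDS keeps the induced graph
`k`-connected, when `m ≥ k`. -/
lemma kconn_union {V : Type*} [Fintype V] (k m : ℕ) (hkm : k ≤ m) (G : SimpleGraph V)
    (OPT D : Finset V)
    (hOPTconn : KConnected k (G.induce ↑OPT))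
    (hOPTdom : ∀ v ∉ OPT, m ≤ (OPT.filter (fun u => G.Adj v u)).card) :
    KConnected k (G.induce ↑(OPT ∪ D)) := by
  obtain ⟨hcard, hconn⟩ := hOPTconn
  have hcardOPT : k < OPT.card := by simpa using hcard
  constructor
  · have : OPT.card ≤ (OPT ∪ D).card := Finset.card_le_card Finset.subset_union_left
    simpa using lt_of_lt_of_le hcardOPT this
  · intro S hS
    -- S₀ : the underlying vertices of S in V
    set S₀ : Finset V := S.image Subtype.val with hS₀def
    have hS₀card : S₀.card ≤ S.card := Finset.card_image_le
    have hS₀lt : S₀.card < k := lt_of_le_of_lt hS₀card hS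
    -- membership transfer: a vertex of OPT ∪ D not in S₀ gives a vertex outside S
    have hnotS : ∀ (v : V) (hv : v ∈ (↑(OPT ∪ D) : Set V)), v ∉ S₀ →
        (⟨v, hv⟩ : (↑(OPT ∪ D) : Set V)) ∉ S := by
      intro v hv hvS₀ hmem
      exact hvS₀ (Finset.mem_image.mpr ⟨⟨v, hv⟩, hmem, rfl⟩)
    have hinS₀ : ∀ (v : V) (hv : v ∈ (↑(OPT ∪ D) : Set V)),
        (⟨v, hv⟩ : (↑(OPT ∪ D) : Set V)) ∉ S → v ∉ S₀ := by
      intro v hv hvS hmem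
      obtain ⟨u, huS, hval⟩ := Finset.mem_image.mp hmem
      exact hvS (by rwa [show u = (⟨v, hv⟩ : (↑(OPT ∪ D) : Set V)) from Subtype.ext hval] at huS)
    -- the removed set inside OPT
    set S' : Finset (↑OPT : Set V) :=
      Finset.univ.filter (fun u : (↑OPT : Set V) => (u : V) ∈ S₀) with hS'def
    have hS'card : S'.card ≤ S₀.card := by
      refine Finset.card_le_card_of_injOn (fun u => (u : V)) ?_ ?_
      · intro u hu
        simp only [hS'def, Finset.mem_coe, Finset.mem_filter] at hu
        exact hu.2
      · intro a _ b _ hab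
        exact Subtype.ext hab
    have hS'lt : S'.card < k := lt_of_le_of_lt hS'card hS₀lt
    have hconn' := hconn S' hS'lt
    -- hom from the small induced graph to the big one
    let f : {v : (↑OPT : Set V) // v ∈ {v : (↑OPT : Set V) | v ∉ S'}} →
        {v : (↑(OPT ∪ D) : Set V) // v ∈ {v : (↑(OPT ∪ D) : Set V) | v ∉ S}} := by
      intro u
      refine ⟨⟨(u.1 : V), ?_⟩, ?_⟩
      · simp only [Finset.coe_union, Set.mem_union]
        exact Or.inl u.1.2
      · apply hnotS
        intro hmem
        apply u.2
        simp only [hS'def, Set.mem_setOf_eq, Finset.mem_filter]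
        exact ⟨Finset.mem_univ _, hmem⟩
    have hf : ∀ a b, ((G.induce ↑OPT).induce {v : (↑OPT : Set V) | v ∉ S'}).Adj a b →
        ((G.induce ↑(OPT ∪ D)).induce {v : (↑(OPT ∪ D) : Set V) | v ∉ S}).Adj (f a) (f b) := by
      intro a b hab
      exact hab
    let F : ((G.induce ↑OPT).induce {v : (↑OPT : Set V) | v ∉ S'}) →g
        ((G.induce ↑(OPT ∪ D)).induce {v : (↑(OPT ∪ D) : Set V) | v ∉ S}) := ⟨f, fun h => hf _ _ h⟩
    -- helper: lift a vertex of OPT \ S₀ to the small graph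
    have hlift : ∀ (v : V) (hvO : v ∈ OPT), v ∉ S₀ →
        ∃ u : {v : (↑OPT : Set V) // v ∈ {v : (↑OPT : Set V) | v ∉ S'}}, ((u.1 : V) = v) := by
      intro v hvO hvS₀
      refine ⟨⟨⟨v, hvO⟩, ?_⟩, rfl⟩
      simp only [hS'def, Set.mem_setOf_eq, Finset.mem_filter]
      intro h
      exact hvS₀ h.2
    -- every vertex of the big graph reaches some vertex whose base lies in OPT \ S₀
    have hstep : ∀ x : {v : (↑(OPT ∪ D) : Set V) // v ∈ {v : (↑(OPT ∪ D) : Set V) | v ∉ S}},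
        ∃ y : {v : (↑(OPT ∪ D) : Set V) // v ∈ {v : (↑(OPT ∪ D) : Set V) | v ∉ S}},
          ((y.1 : V) ∈ OPT ∧ (y.1 : V) ∉ S₀) ∧
          ((G.induce ↑(OPT ∪ D)).induce {v : (↑(OPT ∪ D) : Set V) | v ∉ S}).Reachable x y := by
      intro x
      by_cases hxO : (x.1 : V) ∈ OPT
      · exact ⟨x, ⟨hxO, hinS₀ _ x.1.2 x.2⟩, SimpleGraph.Reachable.refl x⟩
      · have hm := hOPTdom (x.1 : V) hxO
        have hne : ∃ u ∈ OPT.filter (fun u => G.Adj (x.1 : V) u), u ∉ S₀ := by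
          by_contra h
          push_neg at h
          have hsub : OPT.filter (fun u => G.Adj (x.1 : V) u) ⊆ S₀ := h
          have := Finset.card_le_card hsub
          omega
        obtain ⟨u, huf, huS₀⟩ := hne
        rw [Finset.mem_filter] at huf
        have huU : u ∈ (↑(OPT ∪ D) : Set V) := by
          simp only [Finset.coe_union, Set.mem_union]
          exact Or.inl huf.1
        refine ⟨⟨⟨u, huU⟩, hnotS u huU huS₀⟩, ⟨huf.1, huS₀⟩, ?_⟩
        apply SimpleGraph.Adj.reachable
        exact huf.2
    rw [SimpleGraph.connected_iff]
    constructor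
    · -- preconnected
      intro x y
      obtain ⟨x', ⟨hx'O, hx'S₀⟩, hxr⟩ := hstep x
      obtain ⟨y', ⟨hy'O, hy'S₀⟩, hyr⟩ := hstep y
      obtain ⟨ux, hux⟩ := hlift _ hx'O hx'S₀
      obtain ⟨uy, huy⟩ := hlift _ hy'O hy'S₀
      have hfx : F ux = x' := by
        apply Subtype.ext; apply Subtype.ext; exact hux
      have hfy : F uy = y' := by
        apply Subtype.ext; apply Subtype.ext; exact huy
      have hmid : ((G.induce ↑(OPT ∪ D)).induce
          {v : (↑(OPT ∪ D) : Set V) | v ∉ S}).Reachable x' y' := by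
        have := (hconn'.preconnected ux uy).map F
        rwa [hfx, hfy] at this
      exact hxr.trans (hmid.trans hyr.symm)
    · -- nonempty
      have : (OPT \ S₀).Nonempty := by
        apply Finset.card_pos.mp
        have := Finset.le_card_sdiff S₀ OPT
        omega
      obtain ⟨v, hv⟩ := this
      rw [Finset.mem_sdiff] at hv
      have hvU : v ∈ (↑(OPT ∪ D) : Set V) := by
        simp only [Finset.coe_union, Set.mem_union]
        exact Or.inl hv.1
      exact ⟨⟨⟨v, hvU⟩, hnotS v hvU hv.2⟩⟩

/-- Combining an `α`-approximate `m`-fold dominating set `D` with a `γ`-approximate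
node-weighted `k`-connected Steiner augmentation on terminal set `D` gives a
`(k,m)`-CDS of weight at most `(α + γ)` times the optimum, when `m ≥ k`. -/
theorem kmcds_two_phase_ratio {V : Type*} [Fintype V] (k m : ℕ) (hk : 0 < k)
    (hkm : k ≤ m) (G : SimpleGraph V) (hG : KConnected k G)
    (c : V → ℝ) (hc : ∀ v, 0 ≤ c v) (α γ : ℝ) (hγ : 0 ≤ γ)
    (D VF OPT Fmin : Finset V) (hDVF : D ⊆ VF)
    -- `D` is an `m`-fold dominating set:
    (hD : ∀ v ∉ D, m ≤ (D.filter (fun u => G.Adj v u)).card)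
    -- `OPT` is a `(k,m)`-CDS:
    (hOPTconn : KConnected k (G.induce ↑OPT))
    (hOPTdom : ∀ v ∉ OPT, m ≤ (OPT.filter (fun u => G.Adj v u)).card)
    -- `Fmin` is a minimum-weight set whose union with `D` induces a
    -- `k`-connected subgraph:
    (hFminConn : KConnected k (G.induce ↑(Fmin ∪ D)))
    (hFminOpt : ∀ C : Finset V, KConnected k (G.induce ↑(C ∪ D)) →
      ∑ v ∈ Fmin \ D, c v ≤ ∑ v ∈ C \ D, c v)
    -- the two approximation guarantees:
    (hα : ∑ v ∈ D, c v ≤ α * ∑ v ∈ OPT, c v)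
    (hγ' : ∑ v ∈ VF \ D, c v ≤ γ * ∑ v ∈ Fmin \ D, c v) :
    ∑ v ∈ VF, c v ≤ (α + γ) * ∑ v ∈ OPT, c v := by
  have hunion : KConnected k (G.induce ↑(OPT ∪ D)) :=
    kconn_union k m hkm G OPT D hOPTconn hOPTdom
  have hmin := hFminOpt OPT hunion
  have hsub : ∑ v ∈ OPT \ D, c v ≤ ∑ v ∈ OPT, c v :=
    Finset.sum_le_sum_of_subset_of_nonneg (Finset.sdiff_subset) (fun v _ _ => hc v)
  have hsplit : ∑ v ∈ VF \ D, c v + ∑ v ∈ D, c v = ∑ v ∈ VF, c v :=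
    Finset.sum_sdiff hDVF
  calc ∑ v ∈ VF, c v = ∑ v ∈ D, c v + ∑ v ∈ VF \ D, c v := by linarith
    _ ≤ α * ∑ v ∈ OPT, c v + γ * ∑ v ∈ Fmin \ D, c v := by linarith
    _ ≤ α * ∑ v ∈ OPT, c v + γ * ∑ v ∈ OPT, c v := by
        have : γ * ∑ v ∈ Fmin \ D, c v ≤ γ * ∑ v ∈ OPT, c v :=
          mul_le_mul_of_nonneg_left (le_trans hmin hsub) hγ
        linarith
    _ = (α + γ) * ∑ v ∈ OPT, c v := by ring
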